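/- Under power-of-2 scheduling, where two permutation matrices s₁, s₂ are sampled independently and uniformly at random and the one with larger weight ⟨q, ·⟩ is chosen, the expected weight satisfies E[max(⟨q,s₁⟩, ⟨q,s₂⟩)] ≥ (1/n)⟨q, 1⟩ + (1/(2n³))·‖q_{⊥K}‖ for every q ∈ R_+^{n×n}. -/

import Mathlib

open scoped BigOperators
open Finset

noncomputable section

/-- Frobenius inner product on `n × n` real matrices (as functions). -/
def frob {n : ℕ} (x y : Fin n → Fin n → ℝ) : ℝ := ∑ i, ∑ j, x i j * y i j

/-- Frobenius norm. -/
def fnorm {n : ℕ} (x : Fin n → Fin n → ℝ) : ℝ := Real.sqrt (frob x x)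

/-- The matrix `e^i` whose `i`-th row is all ones and all other entries are zero. -/
def rowMat {n : ℕ} (i : Fin n) : Fin n → Fin n → ℝ := fun a _ => if a = i then 1 else 0

/-- The matrix `ẽ^j` whose `j`-th column is all ones and all other entries are zero. -/
def colMat {n : ℕ} (j : Fin n) : Fin n → Fin n → ℝ := fun _ b => if b = j then 1 else 0

/-- The subspace `S` spanned by the row- and column-indicator matrices. -/
def spanS (n : ℕ) : Submodule ℝ (Fin n → Fin n → ℝ) :=
  Submodule.span ℝ (Set.range (rowMat (n := n)) ∪ Set.range (colMat (n := n)))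

/-- The cone `K = S ∩ ℝ₊^{n×n}`. -/
def coneK (n : ℕ) : Set (Fin n → Fin n → ℝ) :=
  {x | x ∈ spanS n ∧ ∀ i j, 0 ≤ x i j}

/-- `p` is the (Euclidean/Frobenius) projection of `x` onto the set `C`. -/
def IsProjOn {n : ℕ} (C : Set (Fin n → Fin n → ℝ)) (x p : Fin n → Fin n → ℝ) : Prop :=
  p ∈ C ∧ ∀ y ∈ C, fnorm (x - p) ≤ fnorm (x - y)

/-- Doubly stochastic matrix. -/
def DoublyStoch {n : ℕ} (ν : Fin n → Fin n → ℝ) : Prop :=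
  (∀ i j, 0 ≤ ν i j) ∧ (∀ i, ∑ j, ν i j = 1) ∧ (∀ j, ∑ i, ν i j = 1)

/-- The permutation matrix of `σ`. -/
def permMat {n : ℕ} (σ : Equiv.Perm (Fin n)) : Fin n → Fin n → ℝ :=
  fun i j => if σ i = j then 1 else 0

/-- The all-ones matrix. -/
def onesMat (n : ℕ) : Fin n → Fin n → ℝ := fun _ _ => 1

namespace Stmt9Aux

variable {n : ℕ}

lemma frob_add_left (x y z : Fin n → Fin n → ℝ) : frob (x + y) z = frob x z + frob y z := by
  simp [frob, add_mul, Finset.sum_add_distrib]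

lemma frob_smul_left (c : ℝ) (x z : Fin n → Fin n → ℝ) : frob (c • x) z = c * frob x z := by
  simp [frob, Finset.mul_sum, mul_assoc]

lemma frob_zero_left (z : Fin n → Fin n → ℝ) : frob 0 z = 0 := by
  simp [frob]

lemma frob_rowMat_permMat (i : Fin n) (σ : Equiv.Perm (Fin n)) :
    frob (rowMat i) (permMat σ) = 1 := by
  simp [frob, rowMat, permMat, ite_mul, one_mul, zero_mul, Finset.sum_ite_eq, Finset.sum_ite_eq']

lemma frob_colMat_permMat (j : Fin n) (σ : Equiv.Perm (Fin n)) :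
    frob (colMat j) (permMat σ) = 1 := by
  simp only [frob, colMat, permMat]
  have h : ∀ a : Fin n, (∑ b, (if b = j then (1:ℝ) else 0) * (if σ a = b then 1 else 0))
      = if σ a = j then 1 else 0 := by
    intro a
    rw [Finset.sum_eq_single j]
    · simp
    · intro b _ hb; simp [hb]
    · intro hj; exact absurd (Finset.mem_univ j) hj
  rw [Finset.sum_congr rfl fun a _ => h a]
  simp [Equiv.apply_eq_iff_eq_symm_apply]

lemma frob_permMat_eq (x : Fin n → Fin n → ℝ) (hx : x ∈ spanS n) (σ τ : Equiv.Perm (Fin n)) :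
    frob x (permMat σ) = frob x (permMat τ) := by
  induction hx using Submodule.span_induction with
  | mem y hy =>
      rcases hy with ⟨i, rfl⟩ | ⟨j, rfl⟩
      · rw [frob_rowMat_permMat, frob_rowMat_permMat]
      · rw [frob_colMat_permMat, frob_colMat_permMat]
  | zero => rw [frob_zero_left, frob_zero_left]
  | add y z _ _ hy hz => rw [frob_add_left, frob_add_left, hy, hz]
  | smul c y _ hy => rw [frob_smul_left, frob_smul_left, hy]

lemma combo_mem (c d : Fin n → ℝ) : (fun i j => c i + d j) ∈ spanS n := by
  have h : (fun i j => c i + d j)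
      = (∑ a, c a • rowMat a) + (∑ b, d b • colMat b) := by
    funext i j
    simp only [Pi.add_apply, Finset.sum_apply, Pi.smul_apply, smul_eq_mul, rowMat, colMat,
      mul_ite, mul_one, mul_zero]
    rw [Finset.sum_ite_eq, Finset.sum_ite_eq]
    simp
  rw [h]
  refine Submodule.add_mem _ (Submodule.sum_mem _ fun a _ => Submodule.smul_mem _ _ ?_)
    (Submodule.sum_mem _ fun b _ => Submodule.smul_mem _ _ ?_)
  · exact Submodule.subset_span (Or.inl ⟨a, rfl⟩)
  · exact Submodule.subset_span (Or.inr ⟨b, rfl⟩)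

lemma card_fiber_swap (a b b' : Fin n) :
    (Finset.univ.filter fun σ : Equiv.Perm (Fin n) => σ a = b).card
      = (Finset.univ.filter fun σ : Equiv.Perm (Fin n) => σ a = b').card := by
  apply Finset.card_nbij' (fun σ => Equiv.swap b b' * σ) (fun σ => Equiv.swap b b' * σ)
  · intro σ hσ
    simp only [Finset.mem_coe, Finset.mem_filter, Finset.mem_univ, true_and] at hσ ⊢
    rw [Equiv.Perm.mul_apply, hσ, Equiv.swap_apply_left]
  · intro σ hσ
    simp only [Finset.mem_coe, Finset.mem_filter, Finset.mem_univ, true_and] at hσ ⊢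
    rw [Equiv.Perm.mul_apply, hσ, Equiv.swap_apply_right]
  · intro σ _; dsimp only; rw [← mul_assoc, Equiv.swap_mul_self, one_mul]
  · intro σ _; dsimp only; rw [← mul_assoc, Equiv.swap_mul_self, one_mul]

lemma card_fiber_mul (a b : Fin n) :
    (Finset.univ.filter fun σ : Equiv.Perm (Fin n) => σ a = b).card * n
      = Fintype.card (Equiv.Perm (Fin n)) := by
  have h := Finset.card_eq_sum_card_fiberwise
    (f := fun σ : Equiv.Perm (Fin n) => σ a) (s := Finset.univ) (t := Finset.univ)
    (fun σ _ => Finset.mem_univ (σ a))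
  rw [Finset.sum_congr rfl (fun b' _ => (card_fiber_swap a b' b))] at h
  rw [Finset.sum_const, smul_eq_mul] at h
  rw [Finset.card_univ, Finset.card_univ, Fintype.card_fin] at h
  rw [mul_comm]
  exact h.symm

lemma card_fiber2_swap_left (i j a b b' : Fin n) (hb : b ≠ j) (hb' : b' ≠ j) :
    (Finset.univ.filter fun σ : Equiv.Perm (Fin n) => σ i = j ∧ σ a = b).card
      = (Finset.univ.filter fun σ : Equiv.Perm (Fin n) => σ i = j ∧ σ a = b').card := by
  apply Finset.card_nbij' (fun σ => Equiv.swap b b' * σ) (fun σ => Equiv.swap b b' * σ)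
  · intro σ hσ
    simp only [Finset.mem_coe, Finset.mem_filter, Finset.mem_univ, true_and] at hσ ⊢
    refine ⟨?_, ?_⟩
    · rw [Equiv.Perm.mul_apply, hσ.1, Equiv.swap_apply_of_ne_of_ne (Ne.symm hb) (Ne.symm hb')]
    · rw [Equiv.Perm.mul_apply, hσ.2, Equiv.swap_apply_left]
  · intro σ hσ
    simp only [Finset.mem_coe, Finset.mem_filter, Finset.mem_univ, true_and] at hσ ⊢
    refine ⟨?_, ?_⟩
    · rw [Equiv.Perm.mul_apply, hσ.1, Equiv.swap_apply_of_ne_of_ne (Ne.symm hb) (Ne.symm hb')]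
    · rw [Equiv.Perm.mul_apply, hσ.2, Equiv.swap_apply_right]
  · intro σ _; dsimp only; rw [← mul_assoc, Equiv.swap_mul_self, one_mul]
  · intro σ _; dsimp only; rw [← mul_assoc, Equiv.swap_mul_self, one_mul]

lemma card_fiber2_swap_right (i j b a a' : Fin n) (ha : a ≠ i) (ha' : a' ≠ i) :
    (Finset.univ.filter fun σ : Equiv.Perm (Fin n) => σ i = j ∧ σ a = b).card
      = (Finset.univ.filter fun σ : Equiv.Perm (Fin n) => σ i = j ∧ σ a' = b).card := by
  apply Finset.card_nbij' (fun σ => σ * Equiv.swap a a') (fun σ => σ * Equiv.swap a a')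
  · intro σ hσ
    simp only [Finset.mem_coe, Finset.mem_filter, Finset.mem_univ, true_and] at hσ ⊢
    refine ⟨?_, ?_⟩
    · rw [Equiv.Perm.mul_apply, Equiv.swap_apply_of_ne_of_ne (Ne.symm ha) (Ne.symm ha'), hσ.1]
    · rw [Equiv.Perm.mul_apply, Equiv.swap_apply_right, hσ.2]
  · intro σ hσ
    simp only [Finset.mem_coe, Finset.mem_filter, Finset.mem_univ, true_and] at hσ ⊢
    refine ⟨?_, ?_⟩
    · rw [Equiv.Perm.mul_apply, Equiv.swap_apply_of_ne_of_ne (Ne.symm ha) (Ne.symm ha'), hσ.1]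
    · rw [Equiv.Perm.mul_apply, Equiv.swap_apply_left, hσ.2]
  · intro σ _; dsimp only; rw [mul_assoc, Equiv.swap_mul_self, mul_one]
  · intro σ _; dsimp only; rw [mul_assoc, Equiv.swap_mul_self, mul_one]

lemma fiber2_empty (i j a : Fin n) (ha : a ≠ i) :
    (Finset.univ.filter fun σ : Equiv.Perm (Fin n) => σ i = j ∧ σ a = j) = ∅ := by
  ext σ
  simp only [Finset.mem_filter, Finset.mem_univ, true_and, Finset.notMem_empty, iff_false]
  rintro ⟨h1, h2⟩
  exact ha (σ.injective (h2.trans h1.symm))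

end Stmt9Aux

open Stmt9Aux

set_option maxHeartbeats 1600000 in
/-- Power-of-2 scheduling: the expected weight of the better of two uniformly random
permutation matrices is at least `(1/n)⟨q,1⟩ + (1/(2n³))‖q_⊥K‖`. -/
theorem stmt9 (n : ℕ) (hn : 0 < n) (q p : Fin n → Fin n → ℝ)
    (hq : ∀ i j, 0 ≤ q i j) (hproj : IsProjOn (coneK n) q p) :
    (1 / ((Nat.factorial n : ℝ)) ^ 2) *
        ∑ σ₁ : Equiv.Perm (Fin n), ∑ σ₂ : Equiv.Perm (Fin n),
          max (frob q (permMat σ₁)) (frob q (permMat σ₂))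
      ≥ (1 / (n : ℝ)) * frob q (onesMat n) + (1 / (2 * (n : ℝ) ^ 3)) * fnorm (q - p) := by
  classical
  have hn0 : (0:ℝ) < n := by exact_mod_cast hn
  have hnne : (n:ℝ) ≠ 0 := ne_of_gt hn0
  -- the centered matrix w = q - P_S q
  set w : Fin n → Fin n → ℝ := fun a b =>
    q a b - (∑ x, q a x)/(n:ℝ) - (∑ x, q x b)/(n:ℝ) + (∑ x, ∑ y, q x y)/(n:ℝ)^2 with hw
  clear_value w
  have hrow : ∀ a, ∑ b, w a b = 0 := by
    intro a
    have t2 : ∑ _b : Fin n, (∑ x, q a x)/(n:ℝ) = (n:ℝ) * ((∑ x, q a x)/(n:ℝ)) := by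
      rw [Finset.sum_const, Finset.card_univ, Fintype.card_fin, nsmul_eq_mul]
    have t3 : ∑ b : Fin n, (∑ x, q x b)/(n:ℝ) = (∑ x, ∑ y, q x y)/(n:ℝ) := by
      rw [← Finset.sum_div, Finset.sum_comm]
    have t4 : ∑ _b : Fin n, (∑ x, ∑ y, q x y)/(n:ℝ)^2
        = (n:ℝ) * ((∑ x, ∑ y, q x y)/(n:ℝ)^2) := by
      rw [Finset.sum_const, Finset.card_univ, Fintype.card_fin, nsmul_eq_mul]
    simp only [hw]
    rw [Finset.sum_add_distrib, Finset.sum_sub_distrib, Finset.sum_sub_distrib, t2, t3, t4]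
    generalize (∑ x : Fin n, q a x) = s1
    generalize (∑ x : Fin n, ∑ y : Fin n, q x y) = s2
    field_simp
    ring
  have hcol : ∀ b, ∑ a, w a b = 0 := by
    intro b
    have t2 : ∑ a : Fin n, (∑ x, q a x)/(n:ℝ) = (∑ x, ∑ y, q x y)/(n:ℝ) := by
      rw [← Finset.sum_div]
    have t3 : ∑ _a : Fin n, (∑ x, q x b)/(n:ℝ) = (n:ℝ) * ((∑ x, q x b)/(n:ℝ)) := by
      rw [Finset.sum_const, Finset.card_univ, Fintype.card_fin, nsmul_eq_mul]
    have t4 : ∑ _a : Fin n, (∑ x, ∑ y, q x y)/(n:ℝ)^2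
        = (n:ℝ) * ((∑ x, ∑ y, q x y)/(n:ℝ)^2) := by
      rw [Finset.sum_const, Finset.card_univ, Fintype.card_fin, nsmul_eq_mul]
    simp only [hw]
    rw [Finset.sum_add_distrib, Finset.sum_sub_distrib, Finset.sum_sub_distrib, t2, t3, t4]
    generalize (∑ x : Fin n, q x b) = s1
    generalize (∑ x : Fin n, ∑ y : Fin n, q x y) = s2
    field_simp
    ring
  -- maximal entry of |w|
  have hne : (Finset.univ : Finset (Fin n × Fin n)).Nonempty :=
    ⟨(⟨0, hn⟩, ⟨0, hn⟩), Finset.mem_univ _⟩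
  obtain ⟨z, _, hzmax⟩ := Finset.exists_max_image Finset.univ
    (fun z : Fin n × Fin n => |w z.1 z.2|) hne
  set i₀ : Fin n := z.1 with hi₀
  set j₀ : Fin n := z.2 with hj₀
  set δ : ℝ := |w i₀ j₀| with hδdef
  have hδ : ∀ a b, |w a b| ≤ δ := fun a b => hzmax (a, b) (Finset.mem_univ _)
  have hδ0 : (0:ℝ) ≤ δ := abs_nonneg _
  clear_value i₀ j₀ δ
  set A : Finset (Equiv.Perm (Fin n)) := Finset.univ.filter (fun σ => σ i₀ = j₀) with hA
  set Pn : ℕ := Fintype.card (Equiv.Perm (Fin n)) with hPn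
  clear_value A Pn
  -- generic fiberwise sum computation
  have swap1 : ∀ (x : Fin n → Fin n → ℝ) (s : Finset (Equiv.Perm (Fin n))),
      ∑ σ ∈ s, frob x (permMat σ)
        = ∑ a, ∑ b, x a b * ((s.filter fun σ => σ a = b).card : ℝ) := by
    intro x s
    simp only [frob]
    rw [Finset.sum_comm]
    refine Finset.sum_congr rfl fun a _ => ?_
    rw [Finset.sum_comm]
    refine Finset.sum_congr rfl fun b _ => ?_
    rw [← Finset.mul_sum]
    congr 1
    simp [permMat, Finset.sum_boole]
  have hSX : (∑ σ : Equiv.Perm (Fin n), frob q (permMat σ)) * n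
      = (Pn:ℝ) * frob q (onesMat n) := by
    rw [swap1 q Finset.univ, Finset.sum_mul]
    have hones : frob q (onesMat n) = ∑ a, ∑ b, q a b := by simp [frob, onesMat]
    rw [hones, Finset.mul_sum]
    refine Finset.sum_congr rfl fun a _ => ?_
    rw [Finset.sum_mul, Finset.mul_sum]
    refine Finset.sum_congr rfl fun b _ => ?_
    have hc : (((Finset.univ.filter fun σ : Equiv.Perm (Fin n) => σ a = b).card : ℝ)) * n
        = (Pn:ℝ) := by
      rw [hPn]
      exact_mod_cast congrArg (Nat.cast (R := ℝ)) (card_fiber_mul a b)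
    rw [mul_assoc, hc]
    ring
  have hSY : (∑ σ : Equiv.Perm (Fin n), frob w (permMat σ)) = 0 := by
    rw [swap1 w Finset.univ]
    refine Finset.sum_eq_zero fun a _ => ?_
    have : ∀ b : Fin n, b ∈ Finset.univ →
        w a b * (((Finset.univ.filter fun σ : Equiv.Perm (Fin n) => σ a = b).card : ℝ))
          = w a b * (((Finset.univ.filter fun σ : Equiv.Perm (Fin n) => σ a = j₀).card : ℝ)) := by
      intro b _
      rw [card_fiber_swap a b j₀]
    rw [Finset.sum_congr rfl this, ← Finset.sum_mul, hrow a, zero_mul]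
  -- the A - fiber sum
  have hfi : (∑ b, w i₀ b * ((A.filter fun σ => σ i₀ = b).card : ℝ))
      = (A.card : ℝ) * w i₀ j₀ := by
    have h1 : ∀ b : Fin n, (A.filter fun σ => σ i₀ = b) = if b = j₀ then A else ∅ := by
      intro b
      by_cases hb : b = j₀
      · subst hb
        rw [if_pos rfl]
        ext σ
        simp only [hA, Finset.mem_filter, Finset.mem_univ, true_and]
        tauto
      · rw [if_neg hb]
        ext σ
        simp only [hA, Finset.mem_filter, Finset.mem_univ, true_and,
          Finset.notMem_empty, iff_false, not_and]
        intro h1' h2'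
        exact hb (h2'.symm.trans h1')
    rw [Finset.sum_congr rfl fun b _ => by rw [h1 b]]
    simp only [apply_ite (Finset.card), Finset.card_empty,
      apply_ite (fun k : ℕ => (k:ℝ)), Nat.cast_zero, mul_ite, mul_zero]
    rw [Finset.sum_ite_eq' Finset.univ j₀ (fun b => w i₀ b * ((A.card:ℝ)))]
    simp only [Finset.mem_univ, if_true]
    ring
  have hSAex : ∃ N : ℝ, 0 ≤ N ∧
      (∑ σ ∈ A, frob w (permMat σ)) = ((A.card : ℝ) + N) * w i₀ j₀ := by
    by_cases hone : ∀ x : Fin n, x = i₀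
    · refine ⟨0, le_refl 0, ?_⟩
      rw [swap1 w A]
      rw [Finset.sum_eq_single i₀ (fun a _ ha => absurd (hone a) ha)
        (fun h => absurd (Finset.mem_univ i₀) h), hfi]
      ring
    · push_neg at hone
      obtain ⟨a₁, ha₁⟩ := hone
      have hb₁ : ∃ b : Fin n, b ≠ j₀ := by
        by_contra hcon
        push_neg at hcon
        exact ha₁ ((hcon a₁).trans (hcon i₀).symm)
      obtain ⟨b₁, hb₁⟩ := hb₁
      refine ⟨((Finset.univ.filter
          fun σ : Equiv.Perm (Fin n) => σ i₀ = j₀ ∧ σ a₁ = b₁).card : ℝ),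
        by positivity, ?_⟩
      rw [swap1 w A, ← Finset.sum_erase_add Finset.univ _ (Finset.mem_univ i₀), hfi]
      have hfa : ∀ a ∈ Finset.univ.erase i₀,
          (∑ b, w a b * ((A.filter fun σ => σ a = b).card : ℝ))
            = -(w a j₀) * ((Finset.univ.filter
                fun σ : Equiv.Perm (Fin n) => σ i₀ = j₀ ∧ σ a₁ = b₁).card : ℝ) := by
        intro a ha
        have haa : a ≠ i₀ := Finset.ne_of_mem_erase ha
        have hcards : ∀ b : Fin n, ((A.filter fun σ => σ a = b).card : ℝ)
            = ((Finset.univ.filter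
                fun σ : Equiv.Perm (Fin n) => σ i₀ = j₀ ∧ σ a₁ = b₁).card : ℝ)
              - (if b = j₀ then ((Finset.univ.filter
                fun σ : Equiv.Perm (Fin n) => σ i₀ = j₀ ∧ σ a₁ = b₁).card : ℝ) else 0) := by
          intro b
          rw [hA, Finset.filter_filter]
          by_cases hb : b = j₀
          · rw [hb]
            rw [fiber2_empty i₀ j₀ a haa]
            simp
          · rw [card_fiber2_swap_right i₀ j₀ b a a₁ haa ha₁,
              card_fiber2_swap_left i₀ j₀ a₁ b b₁ hb hb₁]
            simp [hb]
        rw [Finset.sum_congr rfl fun b _ => by rw [hcards b]]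
        simp only [mul_sub]
        rw [Finset.sum_sub_distrib, ← Finset.sum_mul, hrow a, zero_mul]
        simp only [mul_ite, mul_zero]
        rw [Finset.sum_ite_eq' Finset.univ j₀
          (fun b => w a b * ((Finset.univ.filter
            fun σ : Equiv.Perm (Fin n) => σ i₀ = j₀ ∧ σ a₁ = b₁).card : ℝ))]
        simp only [Finset.mem_univ, if_true]
        ring
      rw [Finset.sum_congr rfl hfa, ← Finset.sum_mul]
      have herase : (∑ a ∈ Finset.univ.erase i₀, -(w a j₀)) = w i₀ j₀ := by
        have h := Finset.sum_erase_add Finset.univ (fun a => w a j₀) (Finset.mem_univ i₀)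
        rw [hcol j₀] at h
        have h2 : (∑ a ∈ Finset.univ.erase i₀, -(w a j₀))
            = -(∑ a ∈ Finset.univ.erase i₀, w a j₀) := by
          rw [Finset.sum_neg_distrib]
        rw [h2]
        linarith
      rw [herase]
      ring
  -- difference of weights only depends on w
  set gmat : Fin n → Fin n → ℝ := fun i j =>
    ((∑ x, q i x)/(n:ℝ) - (∑ x, ∑ y, q x y)/(n:ℝ)^2) + (∑ x, q x j)/(n:ℝ) with hg
  clear_value gmat
  have hgmem : gmat ∈ spanS n := by
    rw [hg]
    exact combo_mem _ _
  have hqgw : q = gmat + w := by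
    funext i j
    simp only [Pi.add_apply, hg, hw]
    ring
  have hdiff : ∀ σ₁ σ₂ : Equiv.Perm (Fin n),
      frob q (permMat σ₁) - frob q (permMat σ₂)
        = frob w (permMat σ₁) - frob w (permMat σ₂) := by
    intro σ₁ σ₂
    rw [hqgw, frob_add_left, frob_add_left, frob_permMat_eq _ hgmem σ₁ σ₂]
    ring
  have hAcard : ((A.card : ℝ)) * (n:ℝ) = (Pn : ℝ) := by
    simp only [hA, hPn]
    exact_mod_cast card_fiber_mul i₀ j₀
  have hstep3 : (∑ σ₁ ∈ A, ∑ σ₂ : Equiv.Perm (Fin n),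
        (frob w (permMat σ₁) - frob w (permMat σ₂)))
      = (Pn:ℝ) * (∑ σ ∈ A, frob w (permMat σ)) := by
    have e : ∀ σ₁ : Equiv.Perm (Fin n),
        (∑ σ₂ : Equiv.Perm (Fin n), (frob w (permMat σ₁) - frob w (permMat σ₂)))
          = (Pn:ℝ) * frob w (permMat σ₁) := by
      intro σ₁
      rw [Finset.sum_sub_distrib, hSY, Finset.sum_const, Finset.card_univ, nsmul_eq_mul,
        sub_zero, hPn]
    rw [Finset.sum_congr rfl fun σ₁ _ => e σ₁, ← Finset.mul_sum]
  have hDabs : (Pn:ℝ) * (((A.card:ℝ)) * δ)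
      ≤ ∑ σ₁ : Equiv.Perm (Fin n), ∑ σ₂ : Equiv.Perm (Fin n),
          |frob q (permMat σ₁) - frob q (permMat σ₂)| := by
    obtain ⟨N, hN0, hSAeq⟩ := hSAex
    have habs : |(Pn:ℝ) * (∑ σ ∈ A, frob w (permMat σ))|
        = (Pn:ℝ) * (((A.card:ℝ) + N) * δ) := by
      rw [hSAeq, abs_mul, abs_mul, Nat.abs_cast,
        abs_of_nonneg (show (0:ℝ) ≤ (A.card:ℝ) + N from add_nonneg (Nat.cast_nonneg _) hN0), ← hδdef]
    calc (Pn:ℝ) * (((A.card:ℝ)) * δ)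
        ≤ (Pn:ℝ) * (((A.card:ℝ) + N) * δ) := by
          apply mul_le_mul_of_nonneg_left _ (by positivity)
          nlinarith [hδ0, hN0]
      _ = |(Pn:ℝ) * (∑ σ ∈ A, frob w (permMat σ))| := habs.symm
      _ = |∑ σ₁ ∈ A, ∑ σ₂ : Equiv.Perm (Fin n),
            (frob w (permMat σ₁) - frob w (permMat σ₂))| := by rw [hstep3]
      _ ≤ ∑ σ₁ ∈ A, |∑ σ₂ : Equiv.Perm (Fin n),
            (frob w (permMat σ₁) - frob w (permMat σ₂))| := Finset.abs_sum_le_sum_abs _ _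
      _ ≤ ∑ σ₁ ∈ A, ∑ σ₂ : Equiv.Perm (Fin n),
            |frob w (permMat σ₁) - frob w (permMat σ₂)| :=
          Finset.sum_le_sum fun σ₁ _ => Finset.abs_sum_le_sum_abs _ _
      _ ≤ ∑ σ₁ : Equiv.Perm (Fin n), ∑ σ₂ : Equiv.Perm (Fin n),
            |frob w (permMat σ₁) - frob w (permMat σ₂)| :=
          Finset.sum_le_sum_of_subset_of_nonneg (Finset.subset_univ A)
            (fun σ₁ _ _ => Finset.sum_nonneg fun σ₂ _ => abs_nonneg _)
      _ = ∑ σ₁ : Equiv.Perm (Fin n), ∑ σ₂ : Equiv.Perm (Fin n),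
            |frob q (permMat σ₁) - frob q (permMat σ₂)| :=
          Finset.sum_congr rfl fun σ₁ _ => Finset.sum_congr rfl fun σ₂ _ => by
            rw [hdiff σ₁ σ₂]
  -- projection bound : fnorm (q - p) ≤ n² δ
  set y₀ : Fin n → Fin n → ℝ := fun i j =>
    ((∑ x, q i x)/(n:ℝ) - (∑ x, ∑ y, q x y)/(n:ℝ)^2 + δ) + (∑ x, q x j)/(n:ℝ) with hy₀
  clear_value y₀
  have hy₀mem : y₀ ∈ coneK n := by
    constructor
    · rw [hy₀]
      exact combo_mem _ _
    · intro i j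
      have h1 : y₀ i j = q i j - w i j + δ := by
        simp only [hy₀, hw]
        ring
      rw [h1]
      have h2 : w i j ≤ δ := (le_abs_self (w i j)).trans (hδ i j)
      have := hq i j
      linarith
  have hle := hproj.2 y₀ hy₀mem
  have hqy : ∀ i j, (q - y₀) i j = w i j - δ := by
    intro i j
    simp only [Pi.sub_apply, hy₀, hw]
    ring
  have hsum0 : (∑ i : Fin n, ∑ j : Fin n, w i j) = 0 :=
    Finset.sum_eq_zero fun i _ => hrow i
  have hfr1 : frob (q - y₀) (q - y₀)
      = frob w w - 2*δ*(∑ i : Fin n, ∑ j : Fin n, w i j) + (n:ℝ)^2*δ^2 := by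
    have inner : ∀ i : Fin n, (∑ j, (w i j * w i j - 2*δ*(w i j) + δ^2))
        = (∑ j, w i j * w i j) - 2*δ*(∑ j, w i j) + (n:ℝ)*δ^2 := by
      intro i
      rw [Finset.sum_add_distrib, Finset.sum_sub_distrib, ← Finset.mul_sum,
        Finset.sum_const, Finset.card_univ, Fintype.card_fin, nsmul_eq_mul]
    have e0 : frob (q - y₀) (q - y₀)
        = ∑ i : Fin n, ∑ j : Fin n, (w i j * w i j - 2*δ*(w i j) + δ^2) := by
      simp only [frob]
      exact Finset.sum_congr rfl fun i _ => Finset.sum_congr rfl fun j _ => by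
        rw [hqy i j]; ring
    rw [e0, Finset.sum_congr rfl fun i _ => inner i, Finset.sum_add_distrib,
      Finset.sum_sub_distrib, ← Finset.mul_sum, Finset.sum_const, Finset.card_univ,
      Fintype.card_fin, nsmul_eq_mul]
    simp only [frob]
    ring
  have hfr2 : frob w w ≤ (n:ℝ)^2 * δ^2 := by
    have e : ∀ i j : Fin n, w i j * w i j ≤ δ^2 := by
      intro i j
      have h1 := hδ i j
      nlinarith [abs_nonneg (w i j), abs_mul_abs_self (w i j)]
    calc frob w w ≤ ∑ _i : Fin n, ∑ _j : Fin n, δ^2 := by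
          simp only [frob]
          exact Finset.sum_le_sum fun i _ => Finset.sum_le_sum fun j _ => e i j
      _ = (n:ℝ)^2*δ^2 := by
          simp only [Finset.sum_const, Finset.card_univ, Fintype.card_fin, nsmul_eq_mul]
          ring
  have hfr3 : frob (q - y₀) (q - y₀) ≤ 2*(n:ℝ)^2*δ^2 := by
    rw [hfr1, hsum0]
    linarith
  have h2nd : 2*(n:ℝ)^2*δ^2 ≤ ((n:ℝ)^2*δ)^2 := by
    by_cases h2 : 2 ≤ n
    · have h2' : (2:ℝ) ≤ (n:ℝ) := by exact_mod_cast h2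
      have key : ∀ N D : ℝ, 0 ≤ D → 2 ≤ N → 2*N^2*D^2 ≤ (N^2*D)^2 := by
        intro N D hD hN
        nlinarith [mul_nonneg (mul_nonneg (sq_nonneg N) (sq_nonneg D))
          (show (0:ℝ) ≤ N^2-2 by nlinarith)]
      exact key (n:ℝ) δ hδ0 h2'
    · have hn1 : n = 1 := by omega
      have hall : ∀ x y : Fin n, x = y := by
        intro x y
        apply Fin.ext
        have hx := x.isLt
        have hy := y.isLt
        omega
      have hw0 : w i₀ j₀ = 0 := by
        have k1 : ∀ x : Fin n, q i₀ x = q i₀ j₀ := fun x => by rw [hall x j₀]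
        have k2 : ∀ x : Fin n, q x j₀ = q i₀ j₀ := fun x => by rw [hall x i₀]
        have k3 : ∀ x y : Fin n, q x y = q i₀ j₀ := fun x y => by rw [hall x i₀, hall y j₀]
        have e1 : (∑ x, q i₀ x) = (n:ℝ) * q i₀ j₀ := by
          rw [Finset.sum_congr rfl fun x _ => k1 x]
          rw [Finset.sum_const, Finset.card_univ, Fintype.card_fin, nsmul_eq_mul]
        have e2 : (∑ x, q x j₀) = (n:ℝ) * q i₀ j₀ := by
          rw [Finset.sum_congr rfl fun x _ => k2 x]
          rw [Finset.sum_const, Finset.card_univ, Fintype.card_fin, nsmul_eq_mul]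
        have e3 : (∑ x : Fin n, ∑ y : Fin n, q x y) = (n:ℝ)^2 * q i₀ j₀ := by
          rw [Finset.sum_congr rfl fun x _ => Finset.sum_congr rfl fun y _ => k3 x y]
          simp only [Finset.sum_const, Finset.card_univ, Fintype.card_fin, nsmul_eq_mul]
          ring
        simp only [hw, e1, e2, e3]
        field_simp
        ring
      have hd0 : δ = 0 := by rw [hδdef, hw0, abs_zero]
      rw [hd0]
      norm_num
  have hfq : fnorm (q - p) ≤ (n:ℝ)^2 * δ := by
    refine le_trans hle ?_
    have hs : fnorm (q - y₀) ≤ Real.sqrt (((n:ℝ)^2*δ)^2) :=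
      Real.sqrt_le_sqrt (le_trans hfr3 h2nd)
    rwa [Real.sqrt_sq (by positivity)] at hs
  -- final assembly
  have hPn0 : (0:ℝ) < (Pn:ℝ) := by
    rw [hPn]
    exact_mod_cast Fintype.card_pos
  have hfact : ((Nat.factorial n : ℕ) : ℝ) = (Pn:ℝ) := by
    rw [hPn, Fintype.card_perm, Fintype.card_fin]
  have hmax : ∀ a b : ℝ, max a b = (a+b)/2 + |a-b|/2 := by
    intro a b
    rcases le_total a b with h | h
    · rw [max_eq_right h, abs_of_nonpos (by linarith)]
      ring
    · rw [max_eq_left h, abs_of_nonneg (by linarith)]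
      ring
  have h0 : (∑ σ₁ : Equiv.Perm (Fin n), ∑ σ₂ : Equiv.Perm (Fin n),
      max (frob q (permMat σ₁)) (frob q (permMat σ₂)))
      = (Pn:ℝ) * (∑ σ : Equiv.Perm (Fin n), frob q (permMat σ))
        + (∑ σ₁ : Equiv.Perm (Fin n), ∑ σ₂ : Equiv.Perm (Fin n),
            |frob q (permMat σ₁) - frob q (permMat σ₂)|)/2 := by
    have inner : ∀ σ₁ : Equiv.Perm (Fin n),
        (∑ σ₂ : Equiv.Perm (Fin n), max (frob q (permMat σ₁)) (frob q (permMat σ₂)))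
          = ((Pn:ℝ) * frob q (permMat σ₁)
              + (∑ σ₂ : Equiv.Perm (Fin n), frob q (permMat σ₂)))/2
            + (∑ σ₂ : Equiv.Perm (Fin n),
                |frob q (permMat σ₁) - frob q (permMat σ₂)|)/2 := by
      intro σ₁
      rw [Finset.sum_congr rfl fun σ₂ _ =>
        hmax (frob q (permMat σ₁)) (frob q (permMat σ₂))]
      rw [Finset.sum_add_distrib, ← Finset.sum_div, ← Finset.sum_div,
        Finset.sum_add_distrib, Finset.sum_const, Finset.card_univ, nsmul_eq_mul, hPn]
    rw [Finset.sum_congr rfl fun σ₁ _ => inner σ₁]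
    rw [Finset.sum_add_distrib, ← Finset.sum_div, ← Finset.sum_div,
      Finset.sum_add_distrib, ← Finset.mul_sum, Finset.sum_const, Finset.card_univ,
      nsmul_eq_mul, hPn]
    ring
  have hDabs2 : (Pn:ℝ)^2 * δ
      ≤ (∑ σ₁ : Equiv.Perm (Fin n), ∑ σ₂ : Equiv.Perm (Fin n),
          |frob q (permMat σ₁) - frob q (permMat σ₂)|) * (n:ℝ) := by
    calc (Pn:ℝ)^2*δ = ((Pn:ℝ)*((A.card:ℝ)*δ))*(n:ℝ) := by
          rw [← hAcard]; ring
      _ ≤ _ := mul_le_mul_of_nonneg_right hDabs (le_of_lt hn0)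
  have final : ∀ (S D F f P N : ℝ), 0 < P → 0 < N → S*N = P*F → P^2*δ ≤ D*N →
      f ≤ N^2*δ → 1/P^2 * (P*S + D/2) ≥ 1/N * F + 1/(2*N^3) * f := by
    intro S D F f P N hP hN h1 h2 h3
    rw [ge_iff_le]
    have e1 : 1/P^2*(P*S + D/2) = S/P + D/(2*P^2) := by
      field_simp
    have e2 : 1/N*F = S/P := by
      field_simp
      linarith [h1]
    have e3 : 1/(2*N^3)*f ≤ D/(2*P^2) := by
      rw [show 1/(2*N^3)*f = f/(2*N^3) by ring]
      rw [div_le_div_iff₀ (by positivity) (by positivity)]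
      have k1 : f*(2*P^2) ≤ (N^2*δ)*(2*P^2) := mul_le_mul_of_nonneg_right h3 (by positivity)
      have k2 : (P^2*δ)*(2*N^2) ≤ (D*N)*(2*N^2) := mul_le_mul_of_nonneg_right h2 (by positivity)
      nlinarith [k1, k2]
    rw [e1, e2]
    linarith [e3]
  rw [hfact, h0]
  exact final _ _ _ _ (Pn:ℝ) (n:ℝ) hPn0 hn0 hSX hDabs2 hfq
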